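/- Let (B, M) be a Noetherian local ring and let S be a local subring of B with maximal ideal S ∩ M such that the completion of S equals the completion of B. If Q is a minimal prime ideal of B, then S ∩ Q is a minimal prime ideal of S. -/

import Mathlib

open TensorProduct

/-- For a flat algebra, any element annihilating `algebraMap R T x` lies in the extension of
the annihilator of `x`. -/
lemma aux_flat_ann {R T : Type*} [CommRing R] [CommRing T] [Algebra R T] [Module.Flat R T]
    (x : R) (t : T) (h : t * algebraMap R T x = 0) :
    t ∈ Ideal.map (algebraMap R T) (LinearMap.ker (LinearMap.lsmul R R x)) := by
  set K : Submodule R R := LinearMap.ker (LinearMap.lsmul R R x) with hKdef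
  have hexact : Function.Exact K.subtype (LinearMap.lsmul R R x) := by
    intro y
    constructor
    · intro hy
      exact ⟨⟨y, hy⟩, rfl⟩
    · rintro ⟨a, rfl⟩
      exact a.2
  have hex2 := Module.Flat.lTensor_exact T hexact
  have hz : (LinearMap.lTensor T (LinearMap.lsmul R R x)) (t ⊗ₜ[R] (1 : R)) = 0 := by
    have h1 : (LinearMap.lTensor T (LinearMap.lsmul R R x)) (t ⊗ₜ[R] (1 : R))
        = t ⊗ₜ[R] x := by
      simp [LinearMap.lTensor_tmul, smul_eq_mul, mul_one]
    rw [h1]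
    have h2 : (TensorProduct.rid R T) (t ⊗ₜ[R] x) = 0 := by
      rw [TensorProduct.rid_tmul, Algebra.smul_def, mul_comm]
      exact h
    exact (TensorProduct.rid R T).map_eq_zero_iff.mp h2
  obtain ⟨z, hz'⟩ := (hex2 _).mp hz
  have key : ∀ w : T ⊗[R] K,
      (TensorProduct.rid R T) (LinearMap.lTensor T K.subtype w)
        ∈ Ideal.map (algebraMap R T) K := by
    intro w
    induction w using TensorProduct.induction_on with
    | zero => simp
    | tmul a b =>
        simp only [LinearMap.lTensor_tmul, Submodule.coe_subtype, TensorProduct.rid_tmul]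
        rw [Algebra.smul_def]
        exact Ideal.mul_mem_right _ _ (Ideal.mem_map_of_mem _ b.2)
    | add a b ha hb =>
        simp only [map_add]
        exact Ideal.add_mem _ ha hb
  have hkey := key z
  rw [hz'] at hkey
  simpa using hkey

/-- The contraction of a minimal prime along a flat algebra map is a minimal prime. -/
lemma aux_comap_minimal {R T : Type*} [CommRing R] [CommRing T] [Algebra R T] [Module.Flat R T]
    {q : Ideal T} (hq : q ∈ minimalPrimes T) :
    q.comap (algebraMap R T) ∈ minimalPrimes R := by
  have hqp : q.IsPrime := hq.1.1
  have hP : (q.comap (algebraMap R T)).IsPrime := Ideal.comap_isPrime _ _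
  refine ⟨⟨hP, bot_le⟩, ?_⟩
  rintro p ⟨hp, -⟩ hle
  haveI := hp
  obtain ⟨p₀, hp₀, hp₀le⟩ := Ideal.exists_minimalPrimes_le (bot_le : (⊥ : Ideal R) ≤ p)
  have hp₀p : p₀.IsPrime := hp₀.1.1
  suffices hsuff : q.comap (algebraMap R T) ≤ p₀ from hsuff.trans hp₀le
  set W : Submonoid T := q.primeCompl ⊔ (p₀.primeCompl.map (algebraMap R T)) with hWdef
  have hdisj : Disjoint ((⊥ : Ideal T) : Set T) (W : Set T) := by
    rw [Set.disjoint_left]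
    rintro y hy hyW
    have hy0 : y = 0 := Ideal.mem_bot.mp hy
    obtain ⟨a, ha, b, hb, hab⟩ := Submonoid.mem_sup.mp hyW
    obtain ⟨s, hs, rfl⟩ := hb
    have h0 : a * algebraMap R T s = 0 := hab.trans hy0
    have hmem := aux_flat_ann s a h0
    have hker : LinearMap.ker (LinearMap.lsmul R R s) ≤ p₀ := by
      intro r hr
      have hsr : s * r = 0 := hr
      have hsrp : s * r ∈ p₀ := hsr ▸ p₀.zero_mem
      rcases hp₀p.mem_or_mem hsrp with h' | h'
      · exact absurd h' hs
      · exact h'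
    have haq : a ∈ q :=
      (Ideal.map_le_iff_le_comap.mpr (hp₀le.trans hle)) (Ideal.map_mono hker hmem)
    exact ha haq
  obtain ⟨q₁, hq₁p, -, hq₁disj⟩ := Ideal.exists_le_prime_disjoint ⊥ W hdisj
  have hq₁le : q₁ ≤ q := by
    intro y hy
    by_contra hyq
    exact Set.disjoint_left.mp hq₁disj hy
      (Submonoid.mem_sup.mpr ⟨y, hyq, 1, Submonoid.one_mem _, mul_one y⟩)
  have hq₁eq : q₁ = q := le_antisymm hq₁le (hq.2 ⟨hq₁p, bot_le⟩ hq₁le)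
  intro r hr
  by_contra hrp
  have hmemW : algebraMap R T r ∈ W :=
    Submonoid.mem_sup.mpr ⟨1, Submonoid.one_mem _, algebraMap R T r,
      ⟨r, hrp, rfl⟩, one_mul _⟩
  have hrq₁ : algebraMap R T r ∈ q₁ := by rw [hq₁eq]; exact hr
  exact Set.disjoint_left.mp hq₁disj hrq₁ hmemW

/-- If a local subring `S` of a local ring `B` has the same completion as `B`
(compatibly with the inclusion), then the contraction of a minimal prime of `B` is a minimal prime of `S`. -/
theorem stmt_8 (B : Type*) [CommRing B] [IsNoetherianRing B] [IsLocalRing B]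
    (S : Subring B) [IsLocalRing ↥S] [IsNoetherianRing ↥S]
    (hmax : IsLocalRing.maximalIdeal ↥S = (IsLocalRing.maximalIdeal B).comap S.subtype)
    (hcomp : ∃ φ : AdicCompletion (IsLocalRing.maximalIdeal ↥S) ↥S ≃+*
        AdicCompletion (IsLocalRing.maximalIdeal B) B,
      ∀ s : ↥S,
        φ (algebraMap ↥S (AdicCompletion (IsLocalRing.maximalIdeal ↥S) ↥S) s) =
          algebraMap B (AdicCompletion (IsLocalRing.maximalIdeal B) B) (s : B)) :
    ∀ Q : Ideal B, Q ∈ minimalPrimes B → Q.comap S.subtype ∈ minimalPrimes ↥S := by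
  intro Q hQ
  haveI hQp : Q.IsPrime := hQ.1.1
  obtain ⟨φ, hφ⟩ := hcomp
  let M : Ideal B := IsLocalRing.maximalIdeal B
  let f : B →+* AdicCompletion M B := algebraMap B (AdicCompletion M B)
  -- the algebra map into the completion is injective
  have hinj : Function.Injective f := by
    rw [injective_iff_map_eq_zero]
    intro b hb
    have hmem : ∀ n : ℕ, b ∈ M ^ n := by
      intro n
      have h1 : AdicCompletion.evalₐ M n (f b) = algebraMap B (B ⧸ M ^ n) b :=
        (AdicCompletion.evalₐ M n).commutes b
      rw [hb, map_zero] at h1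
      have h2 := h1.symm
      rw [Ideal.Quotient.algebraMap_eq] at h2
      exact (Ideal.Quotient.eq_zero_iff_mem).mp h2
    have hbot : (⨅ n : ℕ, M ^ n) = ⊥ :=
      Ideal.iInf_pow_eq_bot_of_isLocalRing M (IsLocalRing.maximalIdeal.isMaximal B).ne_top
    have hb' : b ∈ (⨅ n : ℕ, M ^ n) := Submodule.mem_iInf _ |>.mpr hmem
    rwa [hbot, Ideal.mem_bot] at hb'
  -- find a prime of the completion contracting into Q
  have hbotle : (⊥ : Ideal (AdicCompletion M B)).comap (algebraMap B (AdicCompletion M B)) ≤ Q := by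
    intro x hx
    have h0 : f x = 0 := Ideal.mem_bot.mp (Ideal.mem_comap.mp hx)
    have hx0 : x = 0 := hinj (by rw [h0, map_zero])
    rw [hx0]; exact Q.zero_mem
  obtain ⟨q', hq'ge, hq'p, hq'le⟩ := Ideal.exists_ideal_comap_le_prime Q ⊥ hbotle
  haveI := hq'p
  obtain ⟨q₀, hq₀min, hq₀le⟩ :=
    Ideal.exists_minimalPrimes_le (bot_le : (⊥ : Ideal (AdicCompletion M B)) ≤ q')
  haveI hq₀p : q₀.IsPrime := hq₀min.1.1
  have hq₀Q : q₀.comap f = Q := by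
    refine le_antisymm ((Ideal.comap_mono hq₀le).trans hq'le) ?_
    exact hQ.2 ⟨Ideal.comap_isPrime f q₀, bot_le⟩ ((Ideal.comap_mono hq₀le).trans hq'le)
  -- transfer to the completion of S via φ
  let g : AdicCompletion (IsLocalRing.maximalIdeal ↥S) ↥S →+* AdicCompletion M B := φ
  let qS : Ideal (AdicCompletion (IsLocalRing.maximalIdeal ↥S) ↥S) := q₀.comap g
  have hqSmin : qS ∈ minimalPrimes (AdicCompletion (IsLocalRing.maximalIdeal ↥S) ↥S) := by
    have h1 : ((⊥ : Ideal (AdicCompletion M B)).comap g) = ⊥ := by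
      ext x
      simp only [Ideal.mem_comap, Ideal.mem_bot]
      exact ⟨fun h => φ.injective (by rw [show g x = φ x from rfl] at h; rw [h, map_zero]),
        fun h => by rw [h, map_zero]⟩
    have hsurj : Function.Surjective g := φ.surjective
    have h2 := Ideal.comap_minimalPrimes_eq_of_surjective hsurj (⊥ : Ideal (AdicCompletion M B))
    rw [h1] at h2
    show qS ∈ (⊥ : Ideal (AdicCompletion (IsLocalRing.maximalIdeal ↥S) ↥S)).minimalPrimes
    rw [h2]
    exact ⟨q₀, hq₀min, rfl⟩
  haveI : Module.Flat ↥S (AdicCompletion (IsLocalRing.maximalIdeal ↥S) ↥S) := inferInstance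
  have hfin := aux_comap_minimal (R := ↥S) hqSmin
  have heq : qS.comap (algebraMap ↥S (AdicCompletion (IsLocalRing.maximalIdeal ↥S) ↥S)) =
      Q.comap S.subtype := by
    ext s
    have h1 : ((algebraMap ↥S (AdicCompletion (IsLocalRing.maximalIdeal ↥S) ↥S)) s ∈ qS) ↔
        (φ ((algebraMap ↥S (AdicCompletion (IsLocalRing.maximalIdeal ↥S) ↥S)) s) ∈ q₀) :=
      Iff.rfl
    simp only [Ideal.mem_comap]
    rw [h1, hφ s, ← hq₀Q, Ideal.mem_comap]
    exact Iff.rfl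
  rwa [heq] at hfin
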